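/- Let k ≥ 0 be an integer, S ⊂ ℂ a compact set, and f holomorphic on an open set U ⊇ S. Then there exists a constant C such that for every positive integer m and every z ∈ S with f(z) ≠ 0, |(H_k^m f)(z)| ≤ C·mᵏ·|f(z)|^{m−k}. -/

import Mathlib

/-- `Hop k g` is the result of applying the operator `g ↦ (z ↦ z·g′(z))` `k` times to `g`. -/
noncomputable def Hop (k : ℕ) (g : ℂ → ℂ) : ℂ → ℂ :=
  (fun h : ℂ → ℂ => fun z => z * deriv h z)^[k] g

lemma Hop_succ (k : ℕ) (g : ℂ → ℂ) (z : ℂ) :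
    Hop (k + 1) g z = z * deriv (Hop k g) z := by
  simp [Hop, Function.iterate_succ_apply']

/-- Structural representation of `Hop k (f^m)`. -/
lemma Hop_rep (U : Set ℂ) (hU : IsOpen U) (f : ℂ → ℂ) (hf : DifferentiableOn ℂ f U) (k : ℕ) :
    ∃ (n : ℕ) (j : Fin n → ℕ) (c : Fin n → ℂ → ℂ),
      (∀ i, j i ≤ k) ∧ (∀ i, DifferentiableOn ℂ (c i) U) ∧
      ∀ (m : ℕ) (z : ℂ), z ∈ U →
        Hop k (fun w => f w ^ m) z
          = ∑ i, (Nat.descFactorial m (j i) : ℂ) * c i z * f z ^ (m - j i) := by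
  induction k with
  | zero =>
    refine ⟨1, fun _ => 0, fun _ _ => 1, fun _ => le_refl _, ?_, ?_⟩
    · intro i; exact differentiableOn_const 1
    · intro m z _
      simp [Hop]
  | succ k ih =>
    obtain ⟨n, j, c, hjk, hc, heq⟩ := ih
    have hfa : ∀ i, DifferentiableOn ℂ (deriv (c i)) U :=
      fun i => (((hc i).analyticOnNhd hU).deriv).differentiableOn
    have hfda : DifferentiableOn ℂ (deriv f) U :=
      ((hf.analyticOnNhd hU).deriv).differentiableOn
    refine ⟨n + n, Fin.append j (fun i => j i + 1),
      Fin.append (fun i w => w * deriv (c i) w) (fun i w => w * c i w * deriv f w),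
      ?_, ?_, ?_⟩
    · refine Fin.addCases ?_ ?_
      · intro i; simpa using (hjk i).trans (Nat.le_succ k)
      · intro i; simp only [Fin.append_right]; exact Nat.succ_le_succ (hjk i)
    · refine Fin.addCases ?_ ?_
      · intro i; simp only [Fin.append_left]; exact (differentiableOn_id).mul (hfa i)
      · intro i; simp only [Fin.append_right]
        exact ((differentiableOn_id).mul (hc i)).mul hfda
    · intro m z hz
      have hfz : DifferentiableAt ℂ f z := (hf.differentiableAt (hU.mem_nhds hz))
      have hcz : ∀ i, DifferentiableAt ℂ (c i) z :=
        fun i => ((hc i).differentiableAt (hU.mem_nhds hz))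
      -- derivative of each term
      have hterm : ∀ i : Fin n, HasDerivAt
          (fun w => (Nat.descFactorial m (j i) : ℂ) * c i w * f w ^ (m - j i))
          ((Nat.descFactorial m (j i) : ℂ) * deriv (c i) z * f z ^ (m - j i)
            + (Nat.descFactorial m (j i) : ℂ) * c i z
              * (((m - j i : ℕ) : ℂ) * f z ^ (m - j i - 1) * deriv f z)) z := by
        intro i
        have h1 : HasDerivAt (fun w => (Nat.descFactorial m (j i) : ℂ) * c i w)
            ((Nat.descFactorial m (j i) : ℂ) * deriv (c i) z) z :=
          ((hcz i).hasDerivAt).const_mul _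
        have h2 : HasDerivAt (fun w => f w ^ (m - j i))
            (((m - j i : ℕ) : ℂ) * f z ^ (m - j i - 1) * deriv f z) z :=
          hfz.hasDerivAt.pow _
        exact h1.mul h2
      have hEq : Hop k (fun w => f w ^ m) =ᶠ[nhds z]
          (fun w => ∑ i, (Nat.descFactorial m (j i) : ℂ) * c i w * f w ^ (m - j i)) := by
        filter_upwards [hU.mem_nhds hz] with w hw
        exact heq m w hw
      have hderiv : deriv (Hop k (fun w => f w ^ m)) z
          = ∑ i, ((Nat.descFactorial m (j i) : ℂ) * deriv (c i) z * f z ^ (m - j i)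
            + (Nat.descFactorial m (j i) : ℂ) * c i z
              * (((m - j i : ℕ) : ℂ) * f z ^ (m - j i - 1) * deriv f z)) := by
        rw [hEq.deriv_eq]
        rw [deriv_fun_sum (fun i _ => (hterm i).differentiableAt)]
        exact Finset.sum_congr rfl fun i _ => (hterm i).deriv
      rw [Hop_succ, hderiv, Finset.mul_sum, Fin.sum_univ_add]
      simp only [mul_add, Finset.sum_add_distrib, Fin.append_left, Fin.append_right]
      congr 1
      · refine Finset.sum_congr rfl fun i _ => ?_
        ring
      · refine Finset.sum_congr rfl fun i _ => ?_
        have hd : (Nat.descFactorial m (j i) : ℂ) * ((m - j i : ℕ) : ℂ)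
            = (Nat.descFactorial m (j i + 1) : ℂ) := by
          rw [Nat.descFactorial_succ]
          push_cast
          ring
        have hexp : m - j i - 1 = m - (j i + 1) := by omega
        rw [← hexp, ← hd]
        ring

theorem stmt12 (k : ℕ) (S : Set ℂ) (hS : IsCompact S) (U : Set ℂ) (hU : IsOpen U)
    (hSU : S ⊆ U) (f : ℂ → ℂ) (hf : DifferentiableOn ℂ f U) :
    ∃ C : ℝ, ∀ m : ℕ, 1 ≤ m → ∀ z ∈ S, f z ≠ 0 →
      ‖Hop k (fun w => f w ^ m) z‖
        ≤ C * (m : ℝ) ^ k * ‖f z‖ ^ ((m : ℤ) - k) := by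
  obtain ⟨n, j, c, hjk, hc, heq⟩ := Hop_rep U hU f hf k
  -- bound for f on S
  obtain ⟨M, hM⟩ := hS.exists_bound_of_continuousOn (hf.continuousOn.mono hSU)
  -- bounds for the coefficients on S
  have hB : ∀ i, ∃ B, ∀ z ∈ S, ‖c i z‖ ≤ B :=
    fun i => hS.exists_bound_of_continuousOn ((hc i).continuousOn.mono hSU)
  choose B hBle using hB
  set M1 : ℝ := max 1 M with hM1
  have hM1ge : (1 : ℝ) ≤ M1 := le_max_left _ _
  refine ⟨(∑ i, max (B i) 0) * M1 ^ k, ?_⟩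
  intro m hm z hzS hfz
  have hzU : z ∈ U := hSU hzS
  have ha : 0 < ‖f z‖ := norm_pos_iff.mpr hfz
  set a : ℝ := ‖f z‖ with haa
  have haM1 : a ≤ M1 := le_trans (hM z hzS) (le_max_right _ _)
  rw [heq m z hzU]
  calc ‖∑ i, (Nat.descFactorial m (j i) : ℂ) * c i z * f z ^ (m - j i)‖
      ≤ ∑ i, ‖(Nat.descFactorial m (j i) : ℂ) * c i z * f z ^ (m - j i)‖ :=
        norm_sum_le _ _
    _ ≤ ∑ i, max (B i) 0 * M1 ^ k * (m : ℝ) ^ k * a ^ ((m : ℤ) - k) := by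
        refine Finset.sum_le_sum fun i _ => ?_
        have hApos : (0 : ℝ) < a ^ ((m : ℤ) - k) := zpow_pos ha _
        rcases lt_or_ge m (j i) with hlt | hle
        · -- descFactorial vanishes
          have : Nat.descFactorial m (j i) = 0 := Nat.descFactorial_eq_zero_iff_lt.mpr hlt
          rw [norm_mul, norm_mul, this]
          simp only [Nat.cast_zero, norm_zero, zero_mul]
          have h1 : (0:ℝ) ≤ max (B i) 0 := le_max_right _ _
          have h2 : (0:ℝ) < M1 ^ k := pow_pos (lt_of_lt_of_le one_pos hM1ge) _
          have h3 : (0:ℝ) ≤ (m:ℝ) ^ k := by positivity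
          positivity
        · -- main case
          have hd : (Nat.descFactorial m (j i) : ℝ) ≤ (m : ℝ) ^ k := by
            have := (Nat.descFactorial_le_pow m (j i)).trans
              (Nat.pow_le_pow_right hm (hjk i))
            exact_mod_cast this
          have hcB : ‖c i z‖ ≤ max (B i) 0 :=
            le_trans (hBle i z hzS) (le_max_left _ _)
          have hpow : a ^ (m - j i) ≤ M1 ^ k * a ^ ((m : ℤ) - k) := by
            have e1 : a ^ (m - j i) = a ^ (((m - j i : ℕ)) : ℤ) := by
              rw [zpow_natCast]
            have e2 : (((m - j i : ℕ)) : ℤ) = (((k - j i : ℕ)) : ℤ) + ((m : ℤ) - k) := by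
              have h1 := hjk i
              omega
            rw [e1, e2, zpow_add₀ (ne_of_gt ha), zpow_natCast]
            have h4 : a ^ (k - j i) ≤ M1 ^ (k - j i) :=
              pow_le_pow_left₀ ha.le haM1 _
            have h5 : M1 ^ (k - j i) ≤ M1 ^ k :=
              pow_le_pow_right₀ hM1ge (Nat.sub_le _ _)
            exact mul_le_mul_of_nonneg_right (h4.trans h5) hApos.le
          rw [norm_mul, norm_mul, norm_pow, Complex.norm_natCast]
          calc (Nat.descFactorial m (j i) : ℝ) * ‖c i z‖ * a ^ (m - j i)
              ≤ (m : ℝ) ^ k * max (B i) 0 * (M1 ^ k * a ^ ((m : ℤ) - k)) := by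
                refine mul_le_mul (mul_le_mul hd hcB (norm_nonneg _) (by positivity))
                  hpow (by positivity) (by positivity)
            _ = max (B i) 0 * M1 ^ k * (m : ℝ) ^ k * a ^ ((m : ℤ) - k) := by ring
    _ = (∑ i, max (B i) 0) * M1 ^ k * (m : ℝ) ^ k * a ^ ((m : ℤ) - k) := by
        rw [← Finset.sum_mul, ← Finset.sum_mul, ← Finset.sum_mul]
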